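/- Let k be a field of prime characteristic p and A an associative k-algebra with elements g, x, y satisfying g^{pk} = 1, g x - x g = λ1(g - g^2), g y - y g = λ2(g - g^{μ+1}), x^p = λ1 x, y^p = λ2 y, and x y - y x + μ λ1 y - λ2 x = λ3(1 - g^{μ+1}), where λ1, λ2 ∈ {0,1}, λ3 ∈ k, μ ∈ {1,...,pk-1}. Then for every n ≥ 2, (x)(ad_R y)^n = λ2^{n-1} (x)(ad_R y) - λ3 ∑_{i=0}^{n-2} λ2^i (g^{μ+1})(ad_R y)^{n-1-i}. -/

import Mathlib

theorem adR_iterate_formula (k : Type*) [Field k] (p : ℕ) (hp : p.Prime) [CharP k p]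
    (k' : ℕ) (hk' : k' ≠ 0) (μ : ℕ) (hμ : 1 ≤ μ ∧ μ ≤ p * k' - 1)
    (A : Type*) [Ring A] [Algebra k A] (g x y : A)
    (lam1 lam2 : k) (hl1 : lam1 = 0 ∨ lam1 = 1) (hl2 : lam2 = 0 ∨ lam2 = 1)
    (lam3 : k)
    (hg : g ^ (p * k') = 1)
    (hgx : g * x - x * g = lam1 • (g - g ^ 2))
    (hgy : g * y - y * g = lam2 • (g - g ^ (μ + 1)))
    (hxp : x ^ p = lam1 • x) (hyp : y ^ p = lam2 • y)
    (hxy : x * y - y * x + (μ • lam1) • y - lam2 • x = lam3 • (1 - g ^ (μ + 1))) :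
    ∀ n : ℕ, 2 ≤ n →
      (fun a => a * y - y * a)^[n] x =
        lam2 ^ (n - 1) • (fun a => a * y - y * a) x -
          lam3 • ∑ i ∈ Finset.range (n - 1),
            lam2 ^ i • (fun a => a * y - y * a)^[n - 1 - i] (g ^ (μ + 1)) := by
  set f : A → A := fun a => a * y - y * a with hf
  have hadd : ∀ a b : A, f (a + b) = f a + f b := by
    intro a b; simp only [hf]; noncomm_ring
  have hsub : ∀ a b : A, f (a - b) = f a - f b := by
    intro a b; simp only [hf]; noncomm_ring
  have hsmul : ∀ (c : k) (a : A), f (c • a) = c • f a := by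
    intro c a
    simp only [hf, smul_mul_assoc, mul_smul_comm, smul_sub]
  have hzero : f 0 = 0 := by simp [hf]
  have hfy : f y = 0 := by simp [hf]
  have hf1 : f 1 = 0 := by simp [hf]
  have hsum : ∀ (s : Finset ℕ) (t : ℕ → A),
      f (∑ i ∈ s, t i) = ∑ i ∈ s, f (t i) := by
    intro s t
    induction s using Finset.induction with
    | empty => simpa using hzero
    | insert a s hns ih => rw [Finset.sum_insert hns, Finset.sum_insert hns, hadd, ih]
  have hfx : f x = lam3 • (1 - g ^ (μ + 1)) + lam2 • x - (μ • lam1) • y := by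
    show x * y - y * x = _
    rw [← hxy]; abel
  have hkey : f (f x) = lam2 • f x - lam3 • f (g ^ (μ + 1)) := by
    conv_lhs => rw [hfx]
    rw [hsub, hadd, hsmul, hsmul, hsmul, hsub, hf1, hfy]
    simp only [smul_zero, zero_sub, smul_neg, sub_zero]
    abel
  intro n hn
  induction n, hn using Nat.le_induction with
  | base =>
    simpa [Function.iterate_succ_apply', pow_one] using hkey
  | succ m hm ih =>
    obtain ⟨m', rfl⟩ : ∃ m', m = m' + 1 := ⟨m - 1, by omega⟩
    have h1 : f^[m' + 1 + 1] x = f (f^[m' + 1] x) :=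
      Function.iterate_succ_apply' f (m' + 1) x
    have hsum' : f (∑ i ∈ Finset.range (m' + 1 - 1), lam2 ^ i • f^[m' + 1 - 1 - i] (g ^ (μ + 1)))
        = ∑ i ∈ Finset.range m', lam2 ^ i • f^[m' + 1 - i] (g ^ (μ + 1)) := by
      simp only [Nat.add_sub_cancel]
      rw [hsum]
      refine Finset.sum_congr rfl fun i hi => ?_
      rw [hsmul]
      congr 1
      have h2 : m' + 1 - i = (m' - i) + 1 := by
        simp only [Finset.mem_range] at hi; omega
      rw [h2, Function.iterate_succ_apply']
    rw [h1, ih, hsub, hsmul, hsmul, hkey, hsum']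
    simp only [Nat.add_sub_cancel]
    rw [Finset.sum_range_succ]
    have h3 : m' + 1 - m' = 1 := by omega
    rw [h3]
    simp only [Function.iterate_one, smul_sub, smul_add, smul_smul]
    rw [← pow_succ, mul_comm (lam2 ^ m') lam3]
    abel
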